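/- Let A be an n×n copositive matrix and let I ⊆ {1,…,n} be an index set such that the principal submatrix A_I is positive definite. Let u, v be zeros of A such that Supp(u) \ I = {k} and Supp(v) \ I = {l} for some indices k, l, normalized so that u_k = v_l = 1. Then (Au)_l = A_{kl} + ∑_{j∈I} u_j (Av)_j − v_I^T A_I u_I. Moreover, if u ≠ v, then k ≠ l. -/

import Mathlib

open Matrix

/-- A symmetric matrix `A` is copositive if `xᵀ A x ≥ 0` for all entrywise nonnegative `x`. -/
def Copositive {n : ℕ} (A : Matrix (Fin n) (Fin n) ℝ) : Prop :=
  A.IsSymm ∧ ∀ x : Fin n → ℝ, (∀ i, 0 ≤ x i) → 0 ≤ x ⬝ᵥ A.mulVec x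

/-- The support of a vector. -/
def Supp {ι : Type*} (u : ι → ℝ) : Set ι := {i | u i ≠ 0}

/-- A zero of a copositive matrix: a nonzero nonnegative vector `u` with `uᵀ A u = 0`. -/
def IsZeroOf {n : ℕ} (A : Matrix (Fin n) (Fin n) ℝ) (u : Fin n → ℝ) : Prop :=
  u ≠ 0 ∧ (∀ i, 0 ≤ u i) ∧ u ⬝ᵥ A.mulVec u = 0

/-- A minimal zero: a zero such that no zero has support strictly contained in its support. -/
def IsMinimalZeroOf {n : ℕ} (A : Matrix (Fin n) (Fin n) ℝ) (u : Fin n → ℝ) : Prop :=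
  IsZeroOf A u ∧ ¬ ∃ v, IsZeroOf A v ∧ Supp v ⊂ Supp u

/-- The principal submatrix of `A` with rows and columns in `I`. -/
def subMat {n : ℕ} (A : Matrix (Fin n) (Fin n) ℝ) (I : Finset (Fin n)) :
    Matrix {i // i ∈ I} {i // i ∈ I} ℝ :=
  A.submatrix Subtype.val Subtype.val

/-- The subvector of `u` with indices in `I`. -/
def subVec {n : ℕ} (u : Fin n → ℝ) (I : Finset (Fin n)) : {i // i ∈ I} → ℝ :=
  fun i => u i.val

/-- Irreducibility of a copositive matrix `A` with respect to a set `M` of matrices. -/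
def IrreducibleWrtSet {n : ℕ} (A : Matrix (Fin n) (Fin n) ℝ)
    (M : Set (Matrix (Fin n) (Fin n) ℝ)) : Prop :=
  ¬ ∃ γ : ℝ, 0 < γ ∧ ∃ B ∈ M, B ≠ 0 ∧ Copositive (A - γ • B)

/-- Irreducibility of a copositive matrix `A` with respect to a single matrix `M`. -/
def IrreducibleWrtMat {n : ℕ} (A M : Matrix (Fin n) (Fin n) ℝ) : Prop :=
  ¬ ∃ γ : ℝ, 0 < γ ∧ Copositive (A - γ • M)

/-- An extremal element of a cone `K` of vectors. -/
def IsExtremalIn {ι : Type*} (K : Set (ι → ℝ)) (u : ι → ℝ) : Prop :=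
  u ∈ K ∧ u ≠ 0 ∧ ∀ v w, v ∈ K → w ∈ K → u = v + w →
    (∃ a : ℝ, 0 ≤ a ∧ v = a • u) ∧ (∃ b : ℝ, 0 ≤ b ∧ w = b • u)

/-- The matrix with entries 1 at positions `(i,j)` and `(j,i)` and 0 elsewhere. -/
def Eij {n : ℕ} (i j : Fin n) : Matrix (Fin n) (Fin n) ℝ :=
  fun a b => if (a = i ∧ b = j) ∨ (a = j ∧ b = i) then 1 else 0

section aux

lemma supp_facts {n : ℕ} (u : Fin n → ℝ) (I : Finset (Fin n)) (k : Fin n)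
    (h : Supp u \ (I : Set (Fin n)) = {k}) :
    k ∉ I ∧ ∀ i, i ∉ I → i ≠ k → u i = 0 := by
  have hk : k ∈ Supp u \ (I : Set (Fin n)) := by rw [h]; exact rfl
  refine ⟨hk.2, fun i hiI hik => ?_⟩
  by_contra hne
  have : i ∈ Supp u \ (I : Set (Fin n)) := ⟨hne, hiI⟩
  rw [h] at this
  exact hik this

lemma mulVec_nonneg_of_zero {n : ℕ} (A : Matrix (Fin n) (Fin n) ℝ) (hA : Copositive A)
    (u : Fin n → ℝ) (hu : IsZeroOf A u) (i : Fin n) : 0 ≤ A.mulVec u i := by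
  obtain ⟨hsym, hcop⟩ := hA
  obtain ⟨-, hunn, huq⟩ := hu
  have hvm : A.vecMul u = A.mulVec u := by
    ext j
    simp only [Matrix.vecMul, Matrix.mulVec, dotProduct]
    exact Finset.sum_congr rfl fun x _ => by rw [hsym.apply, mul_comm]
  have key : ∀ t : ℝ, 0 < t → 0 ≤ 2 * A.mulVec u i + t * A i i := by
    intro t ht
    set x : Fin n → ℝ := u + t • (Pi.single i 1 : Fin n → ℝ) with hx
    have hxnn : ∀ j, 0 ≤ x j := by
      intro j
      by_cases h : j = i
      · simp only [hx, Pi.add_apply, Pi.smul_apply, h, Pi.single_eq_same, smul_eq_mul,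
          mul_one]
        linarith [hunn i]
      · simp [hx, Pi.single_eq_of_ne h, hunn j]
    have h0 := hcop x hxnn
    have hexp : x ⬝ᵥ A.mulVec x = t * (2 * A.mulVec u i + t * A i i) := by
      simp only [hx, Matrix.mulVec_add, Matrix.mulVec_smul,
        dotProduct_add, add_dotProduct, smul_dotProduct, dotProduct_smul,
        Matrix.mulVec_single, smul_eq_mul]
      rw [single_dotProduct]
      rw [show A.col i = fun j => A j i * 1 by funext j; simp, MulOpposite.op_one, one_smul]
      have h1 : u ⬝ᵥ (fun j => A j i * 1) = A.mulVec u i := by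
        simp only [mul_one]
        rw [show (fun j => A j i) = fun j => Aᵀ i j from rfl]
        have : u ⬝ᵥ (fun j => Aᵀ i j) = A.vecMul u i := by
          simp only [Matrix.vecMul, dotProduct, Matrix.transpose_apply]
        rw [this, hvm]
      rw [h1, huq]
      have h2 : (Pi.single i 1 : Fin n → ℝ) ⬝ᵥ (fun j => A j i * 1) = A i i := by
        rw [single_dotProduct]; ring
      rw [h2]
      ring
    rw [hexp] at h0
    nlinarith
  by_contra hneg
  push_neg at hneg
  rcases le_or_gt (A i i) 0 with hd | hd
  · have := key 1 one_pos
    nlinarith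
  · have hpos : 0 < -(A.mulVec u i) / A i i := div_pos (by linarith) hd
    have h3 : (-(A.mulVec u i) / A i i) * A i i = -(A.mulVec u i) :=
      div_mul_cancel₀ _ (ne_of_gt hd)
    have h4 := key (-(A.mulVec u i) / A i i) hpos
    rw [h3] at h4
    linarith

end aux

theorem stmt10 {n : ℕ} (A : Matrix (Fin n) (Fin n) ℝ) (hA : Copositive A)
    (I : Finset (Fin n)) (hI : (subMat A I).PosDef)
    (u v : Fin n → ℝ) (hu : IsZeroOf A u) (hv : IsZeroOf A v)
    (k l : Fin n) (hk : Supp u \ (I : Set (Fin n)) = {k})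
    (hl : Supp v \ (I : Set (Fin n)) = {l})
    (huk : u k = 1) (hvl : v l = 1) :
    A.mulVec u l = A k l + (∑ j ∈ I, u j * A.mulVec v j)
      - subVec v I ⬝ᵥ (subMat A I).mulVec (subVec u I) ∧
    (u ≠ v → k ≠ l) := by
  obtain ⟨hkI, hu0⟩ := supp_facts u I k hk
  obtain ⟨hlI, hv0⟩ := supp_facts v I l hl
  have hsym := hA.1
  -- generic splitting lemma for sums against u and v
  have usum : ∀ f : Fin n → ℝ, ∑ j, f j * u j = f k + ∑ j ∈ I, f j * u j := by
    intro f
    rw [← Finset.sum_subset (Finset.subset_univ (insert k I))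
      (fun j _ hj => by
        simp only [Finset.mem_insert, not_or] at hj
        rw [hu0 j hj.2 hj.1, mul_zero])]
    rw [Finset.sum_insert hkI, huk, mul_one]
  have vsum : ∀ f : Fin n → ℝ, ∑ j, f j * v j = f l + ∑ j ∈ I, f j * v j := by
    intro f
    rw [← Finset.sum_subset (Finset.subset_univ (insert l I))
      (fun j _ hj => by
        simp only [Finset.mem_insert, not_or] at hj
        rw [hv0 j hj.2 hj.1, mul_zero])]
    rw [Finset.sum_insert hlI, hvl, mul_one]
  have hsubdot : ∀ w z : Fin n → ℝ,
      subVec w I ⬝ᵥ (subMat A I).mulVec (subVec z I)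
        = ∑ i ∈ I, w i * ∑ j ∈ I, A i j * z j := by
    intro w z
    simp only [dotProduct, Matrix.mulVec, subMat, subVec, Matrix.submatrix_apply]
    rw [Finset.sum_subtype I (fun x => Iff.rfl)
      (fun i => w i * ∑ j ∈ I, A i j * z j)]
    refine Finset.sum_congr rfl fun i _ => ?_
    congr 1
    rw [Finset.sum_subtype I (fun x => Iff.rfl) (fun j => A i.val j * z j)]
  constructor
  · -- algebraic identity
    have lhs : A.mulVec u l = A l k + ∑ j ∈ I, A l j * u j := by
      simp only [Matrix.mulVec, dotProduct]
      exact usum (fun j => A l j)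
    have inner : ∀ j, A.mulVec v j = A j l + ∑ i ∈ I, A j i * v i := by
      intro j
      simp only [Matrix.mulVec, dotProduct]
      exact vsum (fun i => A j i)
    rw [lhs, hsubdot]
    have : ∑ j ∈ I, u j * A.mulVec v j
        = ∑ j ∈ I, u j * A j l + ∑ j ∈ I, ∑ i ∈ I, u j * (A j i * v i) := by
      rw [← Finset.sum_add_distrib]
      refine Finset.sum_congr rfl fun j _ => ?_
      rw [inner j, mul_add, Finset.mul_sum]
    rw [this]
    have hswap : ∑ j ∈ I, ∑ i ∈ I, u j * (A j i * v i)
        = ∑ i ∈ I, v i * ∑ j ∈ I, A i j * u j := by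
      rw [Finset.sum_comm]
      refine Finset.sum_congr rfl fun i _ => ?_
      rw [Finset.mul_sum]
      refine Finset.sum_congr rfl fun j _ => ?_
      rw [hsym.apply i j]
      ring
    rw [hswap, hsym.apply k l]
    have : ∑ j ∈ I, A l j * u j = ∑ j ∈ I, u j * A j l := by
      refine Finset.sum_congr rfl fun j _ => ?_
      rw [hsym.apply l j]; ring
    rw [this]
    ring
  · -- uniqueness: k = l → u = v
    intro huv
    by_contra hkl
    subst hkl
    apply huv
    -- w = u - v is supported on I
    set w : Fin n → ℝ := u - v with hw
    have hwI : ∀ i, i ∉ I → w i = 0 := by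
      intro i hi
      by_cases h : i = k
      · subst h; simp [hw, huk, hvl]
      · simp [hw, hu0 i hi h, hv0 i hi h]
    -- u ⬝ A v ≥ 0
    have hAv := fun i => mulVec_nonneg_of_zero A hA v hv i
    have hAu := fun i => mulVec_nonneg_of_zero A hA u hu i
    have huAv : 0 ≤ u ⬝ᵥ A.mulVec v := by
      apply Finset.sum_nonneg
      intro i _
      exact mul_nonneg (hu.2.1 i) (hAv i)
    have hvAu : 0 ≤ v ⬝ᵥ A.mulVec u := by
      apply Finset.sum_nonneg
      intro i _
      exact mul_nonneg (hv.2.1 i) (hAu i)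
    have hwq : w ⬝ᵥ A.mulVec w ≤ 0 := by
      have : w ⬝ᵥ A.mulVec w
          = u ⬝ᵥ A.mulVec u + v ⬝ᵥ A.mulVec v - u ⬝ᵥ A.mulVec v - v ⬝ᵥ A.mulVec u := by
        simp only [hw, Matrix.mulVec_sub, dotProduct_sub, sub_dotProduct]
        ring
      rw [this, hu.2.2, hv.2.2]
      linarith
    -- relate w quadratic form to submatrix
    have hsub : subVec w I ⬝ᵥ (subMat A I).mulVec (subVec w I) = w ⬝ᵥ A.mulVec w := by
      rw [hsubdot]
      simp only [dotProduct, Matrix.mulVec]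
      rw [← Finset.sum_subset (Finset.subset_univ I)
        (fun i _ hi => by rw [hwI i hi, zero_mul])]
      refine Finset.sum_congr rfl fun i _ => ?_
      congr 1
      exact Finset.sum_subset (Finset.subset_univ I)
        (fun j _ hj => by rw [hwI j hj, mul_zero])
    have hwsub : subVec w I = 0 := by
      by_contra hne
      have h2 := hI.dotProduct_mulVec_pos hne
      have h2' : 0 < subVec w I ⬝ᵥ (subMat A I).mulVec (subVec w I) := by simpa using h2
      rw [hsub] at h2'
      linarith
    have : w = 0 := by
      funext i
      by_cases h : i ∈ I
      · have := congrFun hwsub ⟨i, h⟩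
        simpa [subVec] using this
      · exact hwI i h
    have := sub_eq_zero.mp (by rw [← hw]; exact this)
    exact this
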